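/- arXiv:1301.6157 — 2 statements merged into one kernel-verified Lean document; each statement's English description precedes it below -/
import Mathlib

section
/- Let n, w, γ be positive integers with w+γ ≤ n and gcd(n, w+γ)=1, and set V = lcm(w, w+1, ..., w+γ-1)/w, L = (1/n)·C(n, w+γ), α = L·V·(w+γ). Then V·Σ_{p=1}^{γ} C(γ-1, p-1)·C(n-γ-1, w+γ-p-1)·(w/(w+γ-p)) = (w/(n-γ))·α. -/
open Finset

lemma vand (n w γ : ℕ) (hw : 0 < w) (hγ : 0 < γ) (hle : w + γ ≤ n) :
    ∑ p ∈ Finset.Icc 1 γ, Nat.choose (γ-1) (p-1) * Nat.choose (n-γ) (w+γ-p)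
      = Nat.choose (n-1) (w+γ-1) := by
  have h1 : (γ - 1) + (n - γ) = n - 1 := by omega
  have h2 := Nat.add_choose_eq (γ-1) (n-γ) (w+γ-1)
  rw [h1, Finset.Nat.sum_antidiagonal_eq_sum_range_succ
      (fun i j => Nat.choose (γ-1) i * Nat.choose (n-γ) j)] at h2
  rw [h2, Nat.succ_eq_add_one, show w + γ - 1 + 1 = w + γ from by omega]
  rw [← Finset.Ico_add_one_right_eq_Icc, Finset.sum_Ico_eq_sum_range, show γ + 1 - 1 = γ from by omega]
  have h4 : ∑ k ∈ Finset.range γ, Nat.choose (γ-1) k * Nat.choose (n-γ) (w+γ-1-k)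
      = ∑ k ∈ Finset.range (w+γ), Nat.choose (γ-1) k * Nat.choose (n-γ) (w+γ-1-k) := by
    apply Finset.sum_subset (Finset.range_subset_range.2 (Nat.le_add_left γ w))
    intro k _ hk
    simp only [Finset.mem_range, not_lt] at hk
    rw [Nat.choose_eq_zero_of_lt (by omega), zero_mul]
  rw [← h4]
  apply Finset.sum_congr rfl
  intro k hk
  simp only [Finset.mem_range] at hk
  congr 1 <;> congr 1 <;> omega

/-- The repair-bandwidth identity for the canonical code: with
`V = lcm(w,…,w+γ-1)/w`, `L = C(n,w+γ)/n` and `α = L·V·(w+γ)`,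
`V·Σ_{p=1}^{γ} C(γ-1,p-1)·C(n-γ-1,w+γ-p-1)·(w/(w+γ-p)) = (w/(n-γ))·α`. -/
theorem stmt_3 (n w γ : ℕ) (hn : 0 < n) (hw : 0 < w) (hγ : 0 < γ)
    (hle : w + γ ≤ n) (hcop : Nat.gcd n (w + γ) = 1)
    (V L α : ℚ)
    (hV : V = ((Finset.range γ).lcm (fun i => w + i) : ℚ) / w)
    (hL : L = (Nat.choose n (w + γ) : ℚ) / n)
    (hα : α = L * V * (w + γ)) :
    V * ∑ p ∈ Finset.Icc 1 γ,
        (Nat.choose (γ - 1) (p - 1) : ℚ) * (Nat.choose (n - γ - 1) (w + γ - p - 1) : ℚ) *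
          ((w : ℚ) / ((w : ℚ) + γ - p))
      = ((w : ℚ) / ((n : ℚ) - γ)) * α := by
  subst hα hL
  have hγn : γ < n := by omega
  have hnγ0 : ((n : ℚ) - γ) ≠ 0 := by
    have : (γ : ℚ) < n := by exact_mod_cast hγn
    linarith
  have hn0 : (n : ℚ) ≠ 0 := by positivity
  -- term transformation
  have hterm : ∀ p ∈ Finset.Icc 1 γ,
      (Nat.choose (γ - 1) (p - 1) : ℚ) * (Nat.choose (n - γ - 1) (w + γ - p - 1) : ℚ) *
          ((w : ℚ) / ((w : ℚ) + γ - p))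
        = ((w : ℚ) / ((n : ℚ) - γ)) *
          ((Nat.choose (γ - 1) (p - 1) * Nat.choose (n - γ) (w + γ - p) : ℕ) : ℚ) := by
    intro p hp
    simp only [Finset.mem_Icc] at hp
    obtain ⟨hp1, hp2⟩ := hp
    have key := Nat.add_one_mul_choose_eq (n - γ - 1) (w + γ - p - 1)
    rw [show n - γ - 1 + 1 = n - γ from by omega,
      show w + γ - p - 1 + 1 = w + γ - p from by omega] at key
    have keyQ : ((n : ℚ) - γ) * (Nat.choose (n - γ - 1) (w + γ - p - 1) : ℚ)
        = (Nat.choose (n - γ) (w + γ - p) : ℚ) * ((w : ℚ) + γ - p) := by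
      have e1 : ((n : ℚ) - γ) = ((n - γ : ℕ) : ℚ) := by
        push_cast [Nat.cast_sub hγn.le]; ring
      have e2 : ((w : ℚ) + γ - p) = ((w + γ - p : ℕ) : ℚ) := by
        push_cast [Nat.cast_sub (by omega : p ≤ w + γ)]; ring
      rw [e1, e2]
      exact_mod_cast key
    have hwγp : ((w : ℚ) + γ - p) ≠ 0 := by
      have : (p : ℚ) ≤ γ := by exact_mod_cast hp2
      have : (0 : ℚ) < w := by exact_mod_cast hw
      linarith
    push_cast
    field_simp
    linear_combination ((Nat.choose (γ-1) (p-1) : ℚ)) * keyQ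
  rw [Finset.sum_congr rfl hterm, ← Finset.mul_sum, ← Nat.cast_sum,
    vand n w γ hw hγ hle]
  have key2 := Nat.add_one_mul_choose_eq (n - 1) (w + γ - 1)
  rw [show n - 1 + 1 = n from by omega,
    show w + γ - 1 + 1 = w + γ from by omega] at key2
  have key2Q : (n : ℚ) * (Nat.choose (n - 1) (w + γ - 1) : ℚ)
      = (Nat.choose n (w + γ) : ℚ) * ((w : ℚ) + γ) := by
    exact_mod_cast key2
  field_simp
  linear_combination V * key2Q
end

section
/- For positive integers n, w, γ with w + γ ≤ n and gcd(n, w+γ) = 1: Σ_{p=1}^{γ} C(γ-1, p-1)·C(n-γ-1, w+γ-p-1)·(1/(w+γ-p)) = (1/(n-γ))·(1/n)·C(n, w+γ)·(w+γ), as an identity of rational numbers. -/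
open Finset

lemma aux_mul_choose (m k : ℕ) (hm : 0 < m) (hk : 0 < k) :
    (m.choose k : ℚ) * k = m * ((m - 1).choose (k - 1)) := by
  obtain ⟨m, rfl⟩ := Nat.exists_eq_succ_of_ne_zero hm.ne'
  obtain ⟨k, rfl⟩ := Nat.exists_eq_succ_of_ne_zero hk.ne'
  simp only [Nat.succ_sub_one]
  exact_mod_cast congrArg (Nat.cast : ℕ → ℚ) (Nat.add_one_mul_choose_eq m k).symm

lemma aux_sum (n w γ : ℕ) (hw : 0 < w) (hγ : 0 < γ) (hle : w + γ ≤ n) :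
    ∑ p ∈ Finset.Icc 1 γ, (γ - 1).choose (p - 1) * (n - γ).choose (w + γ - p)
      = (n - 1).choose (w + γ - 1) := by
  have h1 : n - 1 = (γ - 1) + (n - γ) := by omega
  rw [h1, Nat.add_choose_eq, Finset.Nat.sum_antidiagonal_eq_sum_range_succ_mk]
  have h2 : (w + γ - 1).succ = w + γ := by omega
  rw [h2]
  rw [← Finset.Ico_add_one_right_eq_Icc, Finset.sum_Ico_eq_sum_range]
  have h3 : γ + 1 - 1 = γ := by omega
  rw [h3]
  rw [← Finset.sum_subset (Finset.range_subset_range.2 (by omega : γ ≤ w + γ))]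
  · apply Finset.sum_congr rfl
    intro i hi
    simp only [Finset.mem_range] at hi
    congr 2 <;> omega
  · intro i _ hi
    simp only [Finset.mem_range, not_lt] at hi
    have : (γ - 1).choose i = 0 := Nat.choose_eq_zero_of_lt (by omega)
    simp [this]

/-- The combinatorial identity equating the two expressions for the repair
bandwidth of the canonical code:
`Σ_{p=1}^{γ} C(γ-1,p-1)·C(n-γ-1,w+γ-p-1)/(w+γ-p) = (1/(n-γ))·(1/n)·C(n,w+γ)·(w+γ)`. -/
theorem stmt_16 (n w γ : ℕ) (hn : 0 < n) (hw : 0 < w) (hγ : 0 < γ)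
    (hle : w + γ ≤ n) (hcop : Nat.gcd n (w + γ) = 1) :
    ∑ p ∈ Finset.Icc 1 γ,
        (Nat.choose (γ - 1) (p - 1) : ℚ) * (Nat.choose (n - γ - 1) (w + γ - p - 1) : ℚ) *
          (1 / ((w : ℚ) + γ - p))
      = (1 / ((n : ℚ) - γ)) * (1 / (n : ℚ)) * (Nat.choose n (w + γ) : ℚ) * ((w : ℚ) + γ) := by
  have hγn : γ ≤ n := le_trans (Nat.le_add_left _ _) hle
  have hnγ : 0 < n - γ := by omega
  have hcast : ((n - γ : ℕ) : ℚ) = (n : ℚ) - γ := by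
    push_cast [Nat.cast_sub hγn]; ring
  have hmQ : ((n - γ : ℕ) : ℚ) ≠ 0 := by exact_mod_cast hnγ.ne'
  have key : ∀ p ∈ Finset.Icc 1 γ,
      (Nat.choose (γ - 1) (p - 1) : ℚ) * (Nat.choose (n - γ - 1) (w + γ - p - 1) : ℚ) *
          (1 / ((w : ℚ) + γ - p))
        = (1 / ((n : ℚ) - γ)) *
            ((Nat.choose (γ - 1) (p - 1) : ℚ) * (Nat.choose (n - γ) (w + γ - p) : ℚ)) := by
    intro p hp
    simp only [Finset.mem_Icc] at hp
    have hk : 0 < w + γ - p := by omega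
    have hkc : ((w + γ - p : ℕ) : ℚ) = (w : ℚ) + γ - p := by
      have hpw : p ≤ w + γ := by omega
      push_cast [Nat.cast_sub hpw]; ring
    have hkQ : ((w + γ - p : ℕ) : ℚ) ≠ 0 := by exact_mod_cast hk.ne'
    have h1 := aux_mul_choose (n - γ) (w + γ - p) hnγ hk
    have h1' : ((n - γ - 1).choose (w + γ - p - 1) : ℚ) / ((w + γ - p : ℕ) : ℚ)
        = ((n - γ).choose (w + γ - p) : ℚ) / ((n - γ : ℕ) : ℚ) := by
      rw [div_eq_div_iff hkQ hmQ]
      linear_combination -h1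
    rw [← hkc, ← hcast, mul_one_div, mul_div_assoc, h1']
    ring
  rw [Finset.sum_congr rfl key, ← Finset.mul_sum]
  have hs : (∑ p ∈ Finset.Icc 1 γ,
      ((Nat.choose (γ - 1) (p - 1) : ℚ) * (Nat.choose (n - γ) (w + γ - p) : ℚ)))
      = ((n - 1).choose (w + γ - 1) : ℚ) := by
    have := aux_sum n w γ hw hγ hle
    exact_mod_cast congrArg (Nat.cast : ℕ → ℚ) this
  rw [hs]
  have h4 := aux_mul_choose n (w + γ) hn (by omega)
  have hnQ : (n : ℚ) ≠ 0 := by exact_mod_cast hn.ne'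
  push_cast at h4
  have h5 : ((n - 1).choose (w + γ - 1) : ℚ)
      = (1 / (n : ℚ)) * (n.choose (w + γ) : ℚ) * ((w : ℚ) + γ) := by
    field_simp
    linear_combination -h4
  rw [h5]
  ring
end
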